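/- Let A have Spark(A) = L+1 with k ≤ L. Then γ(ℓ_p, A, k) is a continuous function of p on [0,1]. -/

import Mathlib

open Finset MeasureTheory Filter

/-- `phi p x = |x|^p`, with the convention `|x|^0 = 1` for `x ≠ 0` and `phi p 0 = 0`. -/
noncomputable def phi (p x : ℝ) : ℝ := if x = 0 then 0 else |x| ^ p

open Classical in
/-- support of a vector, as a finset -/
noncomputable def supp {n : ℕ} (z : Fin n → ℝ) : Finset (Fin n) :=
  Finset.univ.filter (fun i => z i ≠ 0)

/-- `Spark(A) = s`: some `s` columns are linearly dependent (a kernel vector with support of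
size `s`), and every nonzero kernel vector has support of size at least `s`. -/
def sparkEq {m n : ℕ} (A : Matrix (Fin m) (Fin n) ℝ) (s : ℕ) : Prop :=
  (∃ z, A.mulVec z = 0 ∧ z ≠ 0 ∧ (supp z).card = s) ∧
  (∀ z, A.mulVec z = 0 → z ≠ 0 → s ≤ (supp z).card)

/-- The set of constants `γ` satisfying the null space property inequality at level `k`. -/
def validNSC {m n : ℕ} (A : Matrix (Fin m) (Fin n) ℝ) (p : ℝ) (k : ℕ) : Set ℝ :=
  {γ | ∀ S : Finset (Fin n), S.card ≤ k → ∀ z, A.mulVec z = 0 →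
    ∑ i ∈ S, phi p (z i) ≤ γ * ∑ i ∈ Sᶜ, phi p (z i)}

/-- The null space constant `γ(ℓ_p, A, k)`: the smallest valid constant. -/
noncomputable def gammaNSC {m n : ℕ} (A : Matrix (Fin m) (Fin n) ℝ) (p : ℝ) (k : ℕ) : ℝ :=
  sInf (validNSC A p k)

/-- The ratio `θ(p, z, S)`. -/
noncomputable def theta {n : ℕ} (p : ℝ) (z : Fin n → ℝ) (S : Finset (Fin n)) : ℝ :=
  (∑ i ∈ S, phi p (z i)) / (∑ i ∈ Sᶜ, phi p (z i))

/-! ### basic phi lemmas -/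

lemma phi_nonneg (p x : ℝ) : 0 ≤ phi p x := by
  unfold phi; split
  · exact le_refl 0
  · exact Real.rpow_nonneg (abs_nonneg x) p

lemma phi_pos {p x : ℝ} (hx : x ≠ 0) : 0 < phi p x := by
  unfold phi; rw [if_neg hx]
  exact Real.rpow_pos_of_pos (abs_pos.2 hx) p

lemma phi_eq_rpow {p : ℝ} (hp : 0 < p) (x : ℝ) : phi p x = |x| ^ p := by
  unfold phi; split
  · subst ‹x = 0›; rw [abs_zero, Real.zero_rpow hp.ne']
  · rfl

lemma phi_le_one {p x : ℝ} (hp : 0 ≤ p) (hx : |x| ≤ 1) : phi p x ≤ 1 := by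
  unfold phi; split
  · exact zero_le_one
  · exact Real.rpow_le_one (abs_nonneg x) hx hp

lemma phi_zero (x : ℝ) : phi 0 x = if x = 0 then 0 else 1 := by
  unfold phi; split
  · rfl
  · rw [Real.rpow_zero]

section Main

variable {M N L k : ℕ} (A : Matrix (Fin M) (Fin N) ℝ)

def Tset (p : ℝ) (k : ℕ) : Set ℝ :=
  {x | ∃ S : Finset (Fin N), ∃ z, S.card ≤ k ∧ A.mulVec z = 0 ∧ z ≠ 0 ∧ theta p z S = x}

variable {A}

lemma mem_supp_iff {z : Fin N → ℝ} {i : Fin N} : i ∈ supp z ↔ z i ≠ 0 := by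
  simp [supp]

lemma exists_compl_mem_supp
    (hsp : ∀ z, A.mulVec z = 0 → z ≠ 0 → L + 1 ≤ (supp z).card) (hk : k ≤ L)
    {S : Finset (Fin N)} (hS : S.card ≤ k) {z} (hz : A.mulVec z = 0) (hz0 : z ≠ 0) :
    ∃ i ∈ Sᶜ, z i ≠ 0 := by
  by_contra h
  push_neg at h
  have hsub : supp z ⊆ S := by
    intro i hi
    by_contra hiS
    exact (mem_supp_iff.1 hi) (h i (Finset.mem_compl.2 hiS))
  have h1 := hsp z hz hz0
  have h2 := Finset.card_le_card hsub
  omega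

lemma denom_pos
    (hsp : ∀ z, A.mulVec z = 0 → z ≠ 0 → L + 1 ≤ (supp z).card) (hk : k ≤ L)
    {S : Finset (Fin N)} (hS : S.card ≤ k) {z} (hz : A.mulVec z = 0) (hz0 : z ≠ 0) (p : ℝ) :
    0 < ∑ i ∈ Sᶜ, phi p (z i) := by
  obtain ⟨i, hi, hzi⟩ := exists_compl_mem_supp hsp hk hS hz hz0
  exact Finset.sum_pos' (fun j _ => phi_nonneg p (z j)) ⟨i, hi, phi_pos hzi⟩

lemma validNSC_eq_upperBounds
    (hsp : ∀ z, A.mulVec z = 0 → z ≠ 0 → L + 1 ≤ (supp z).card) (hk : k ≤ L) (p : ℝ) :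
    validNSC A p k = upperBounds (Tset A p k) := by
  ext γ
  constructor
  · rintro hγ x ⟨S, z, hS, hz, hz0, rfl⟩
    have hd := denom_pos hsp hk hS hz hz0 p
    rw [theta, div_le_iff₀ hd]
    exact hγ S hS z hz
  · intro hγ S hS z hz
    by_cases hz0 : z = 0
    · subst hz0
      simp [phi]
    · have : theta p z S ≤ γ := hγ ⟨S, z, hS, hz, hz0, rfl⟩
      have hd := denom_pos hsp hk hS hz hz0 p
      rw [theta, div_le_iff₀ hd] at this
      exact this

lemma Tset_nonempty (hspark : sparkEq A (L + 1)) (p : ℝ) : (0:ℝ) ∈ Tset A p k := by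
  obtain ⟨z, hz, hz0, -⟩ := hspark.1
  exact ⟨∅, z, Nat.zero_le k, hz, hz0, by simp [theta]⟩

lemma gammaNSC_eq_sSup (hspark : sparkEq A (L + 1)) (hk : k ≤ L) (p : ℝ)
    (hbdd : BddAbove (Tset A p k)) :
    gammaNSC A p k = sSup (Tset A p k) := by
  have hne : (Tset A p k).Nonempty := ⟨0, Tset_nonempty hspark p⟩
  have hlub : IsLUB (Tset A p k) (sSup (Tset A p k)) := isLUB_csSup hne hbdd
  rw [gammaNSC, validNSC_eq_upperBounds hspark.2 hk, hlub.upperBounds_eq, csInf_Ici]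

lemma gammaNSC_nonneg (hspark : sparkEq A (L + 1)) (hk : k ≤ L) (p : ℝ)
    (hbdd : BddAbove (Tset A p k)) : 0 ≤ gammaNSC A p k := by
  rw [gammaNSC_eq_sSup hspark hk p hbdd]
  exact le_csSup hbdd (Tset_nonempty hspark p)

end Main
section Main2

variable {M N L k : ℕ} {A : Matrix (Fin M) (Fin N) ℝ}

lemma phi_smul (p : ℝ) {c : ℝ} (hc : c ≠ 0) (x : ℝ) :
    phi p (c * x) = |c| ^ p * phi p x := by
  rcases eq_or_ne x 0 with rfl | hx
  · simp [phi]
  · have hcx : c * x ≠ 0 := mul_ne_zero hc hx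
    unfold phi
    rw [if_neg hcx, if_neg hx, abs_mul, Real.mul_rpow (abs_nonneg c) (abs_nonneg x)]

lemma theta_smul (p : ℝ) {c : ℝ} (hc : c ≠ 0) (z : Fin N → ℝ) (S : Finset (Fin N)) :
    theta p (c • z) S = theta p z S := by
  have h1 : ∀ T : Finset (Fin N), ∑ i ∈ T, phi p ((c • z) i) = |c| ^ p * ∑ i ∈ T, phi p (z i) := by
    intro T
    rw [Finset.mul_sum]
    exact Finset.sum_congr rfl fun i _ => phi_smul p hc (z i)
  have hcp : |c| ^ p ≠ 0 := (Real.rpow_pos_of_pos (abs_pos.2 hc) p).ne'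
  rw [theta, theta, h1, h1, mul_div_mul_left _ _ hcp]

lemma mem_Tset_sphere {p : ℝ} {x : ℝ} (hx : x ∈ Tset A p k) :
    ∃ S : Finset (Fin N), ∃ z, S.card ≤ k ∧ A.mulVec z = 0 ∧ ‖z‖ = 1 ∧ theta p z S = x := by
  obtain ⟨S, z, hS, hz, hz0, rfl⟩ := hx
  have hnz : ‖z‖ ≠ 0 := norm_ne_zero_iff.2 hz0
  refine ⟨S, ‖z‖⁻¹ • z, hS, ?_, ?_, ?_⟩
  · rw [Matrix.mulVec_smul, hz, smul_zero]
  · rw [norm_smul, norm_inv, norm_norm, inv_mul_cancel₀ hnz]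
  · exact theta_smul p (inv_ne_zero hnz) z S

lemma isClosed_ker : IsClosed {z : Fin N → ℝ | A.mulVec z = 0} := by
  have hc : Continuous fun z : Fin N → ℝ => A.mulVec z := by
    have := LinearMap.continuous_of_finiteDimensional (Matrix.mulVecLin A)
    exact this
  exact isClosed_singleton.preimage hc

lemma isCompact_sphK : IsCompact {z : Fin N → ℝ | A.mulVec z = 0 ∧ ‖z‖ = 1} := by
  have heq : {z : Fin N → ℝ | A.mulVec z = 0 ∧ ‖z‖ = 1} =
      {z : Fin N → ℝ | A.mulVec z = 0} ∩ Metric.sphere 0 1 := by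
    ext z
    simp [Metric.mem_sphere, dist_zero_right]
  rw [heq]
  exact (isCompact_sphere (0 : Fin N → ℝ) 1).inter_left isClosed_ker

lemma continuous_phi {p : ℝ} (hp : 0 < p) : Continuous (phi p) := by
  have h : phi p = fun x => |x| ^ p := funext (phi_eq_rpow hp)
  rw [h]
  refine continuous_iff_continuousAt.2 fun x => ?_
  exact (Real.continuousAt_rpow_const |x| p (Or.inr hp.le)).comp continuous_abs.continuousAt

lemma bddAbove_Tset_pos
    (hsp : ∀ z, A.mulVec z = 0 → z ≠ 0 → L + 1 ≤ (supp z).card) (hk : k ≤ L)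
    {p : ℝ} (hp : 0 < p) : BddAbove (Tset A p k) := by
  have hsub : Tset A p k ⊆
      ⋃ S ∈ {S : Finset (Fin N) | S.card ≤ k},
        (fun z => theta p z S) '' {z : Fin N → ℝ | A.mulVec z = 0 ∧ ‖z‖ = 1} := by
    intro x hx
    obtain ⟨S, z, hS, hz, hz1, rfl⟩ := mem_Tset_sphere hx
    exact Set.mem_biUnion hS ⟨z, ⟨hz, hz1⟩, rfl⟩
  refine BddAbove.mono hsub ?_
  refine (Set.Finite.bddAbove_biUnion (Set.toFinite _)).2 ?_
  intro S hS
  refine IsCompact.bddAbove_image isCompact_sphK ?_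
  have hnum : Continuous fun z : Fin N → ℝ => ∑ i ∈ S, phi p (z i) :=
    continuous_finset_sum _ fun i _ => (continuous_phi hp).comp (continuous_apply i)
  have hden : Continuous fun z : Fin N → ℝ => ∑ i ∈ Sᶜ, phi p (z i) :=
    continuous_finset_sum _ fun i _ => (continuous_phi hp).comp (continuous_apply i)
  refine ContinuousOn.div hnum.continuousOn hden.continuousOn ?_
  rintro z ⟨hz, hz1⟩
  have hz0 : z ≠ 0 := by
    intro h
    rw [h, norm_zero] at hz1
    norm_num at hz1
  exact (denom_pos hsp hk hS hz hz0 p).ne'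

lemma phi_zero_le_one (x : ℝ) : phi 0 x ≤ 1 := by
  rw [phi_zero]; split <;> norm_num

lemma bddAbove_Tset_zero
    (hsp : ∀ z, A.mulVec z = 0 → z ≠ 0 → L + 1 ≤ (supp z).card) (hk : k ≤ L) :
    BddAbove (Tset A (0:ℝ) k) := by
  refine ⟨(k : ℝ), ?_⟩
  rintro x ⟨S, z, hS, hz, hz0, rfl⟩
  have hnum : ∑ i ∈ S, phi 0 (z i) ≤ (k : ℝ) := by
    calc ∑ i ∈ S, phi 0 (z i) ≤ ∑ _i ∈ S, (1:ℝ) :=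
          Finset.sum_le_sum fun i _ => phi_zero_le_one (z i)
      _ = S.card := by simp
      _ ≤ (k : ℝ) := by exact_mod_cast hS
  have hden : (1:ℝ) ≤ ∑ i ∈ Sᶜ, phi 0 (z i) := by
    obtain ⟨i, hi, hzi⟩ := exists_compl_mem_supp hsp hk hS hz hz0
    have h1 : phi 0 (z i) = 1 := by rw [phi_zero, if_neg hzi]
    calc (1:ℝ) = phi 0 (z i) := h1.symm
      _ ≤ ∑ j ∈ Sᶜ, phi 0 (z j) :=
          Finset.single_le_sum (fun j _ => phi_nonneg 0 (z j)) hi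
  rw [theta, div_le_iff₀ (lt_of_lt_of_le one_pos hden)]
  calc ∑ i ∈ S, phi 0 (z i) ≤ (k : ℝ) := hnum
    _ ≤ (k:ℝ) * ∑ i ∈ Sᶜ, phi 0 (z i) := le_mul_of_one_le_right (Nat.cast_nonneg k) hden

lemma bddAbove_Tset
    (hsp : ∀ z, A.mulVec z = 0 → z ≠ 0 → L + 1 ≤ (supp z).card) (hk : k ≤ L)
    {p : ℝ} (hp : 0 ≤ p) : BddAbove (Tset A p k) := by
  rcases eq_or_lt_of_le hp with rfl | hp'
  · exact bddAbove_Tset_zero hsp hk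
  · exact bddAbove_Tset_pos hsp hk hp'

end Main2
section Main3

variable {M N L k : ℕ} {A : Matrix (Fin M) (Fin N) ℝ}

lemma continuous_phi_in_p (x : ℝ) : Continuous fun p => phi p x := by
  rcases eq_or_ne x 0 with rfl | hx
  · simp only [phi, if_pos rfl]
    exact continuous_const
  · have h : (fun p => phi p x) = fun p => |x| ^ p := by
      funext p
      rw [phi, if_neg hx]
    rw [h]
    exact continuous_iff_continuousAt.2 fun p =>
      Real.continuousAt_const_rpow (abs_ne_zero.2 hx)

lemma continuous_theta_in_p
    (hsp : ∀ z, A.mulVec z = 0 → z ≠ 0 → L + 1 ≤ (supp z).card) (hk : k ≤ L)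
    {S : Finset (Fin N)} (hS : S.card ≤ k) {z} (hz : A.mulVec z = 0) (hz0 : z ≠ 0) :
    Continuous fun p => theta p z S := by
  have hnum : Continuous fun p => ∑ i ∈ S, phi p (z i) :=
    continuous_finset_sum _ fun i _ => continuous_phi_in_p (z i)
  have hden : Continuous fun p => ∑ i ∈ Sᶜ, phi p (z i) :=
    continuous_finset_sum _ fun i _ => continuous_phi_in_p (z i)
  exact hnum.div hden fun p => (denom_pos hsp hk hS hz hz0 p).ne'

lemma exists_const_subseq {β : Type*} [Finite β] (u : ℕ → β) :
    ∃ b, ∃ φ : ℕ → ℕ, StrictMono φ ∧ ∀ j, u (φ j) = b := by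
  have hfreq : ∃ b, ∃ᶠ n in atTop, u n = b := by
    by_contra h
    push_neg at h
    have h' : ∀ᶠ n in atTop, ∀ b, u n ≠ b := by
      exact Filter.eventually_all.2 fun b => h b
    obtain ⟨n, hn⟩ := h'.exists
    exact hn (u n) rfl
  obtain ⟨b, hb⟩ := hfreq
  obtain ⟨φ, h1, h2⟩ := Filter.extraction_of_frequently_atTop hb
  exact ⟨b, φ, h1, h2⟩

lemma exists_abs_eq_norm {ι : Type*} [Fintype ι] [Nonempty ι] (f : ι → ℝ) :
    ∃ i, ‖f‖ = |f i| := by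
  obtain ⟨i, -, hi⟩ :=
    Finset.exists_mem_eq_sup Finset.univ Finset.univ_nonempty (fun i => (‖f i‖₊ : NNReal))
  refine ⟨i, ?_⟩
  rw [Pi.norm_def, hi]
  simp [Real.norm_eq_abs]

lemma tendsto_phi_joint {p : ℕ → ℝ} {p0 : ℝ} (hp0 : 0 < p0) (hpp : ∀ j, 0 < p j)
    (hp : Filter.Tendsto p atTop (nhds p0)) {x : ℕ → ℝ} {x0 : ℝ}
    (hx : Filter.Tendsto x atTop (nhds x0)) :
    Filter.Tendsto (fun j => phi (p j) (x j)) atTop (nhds (phi p0 x0)) := by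
  have h1 : (fun j => phi (p j) (x j)) = fun j => |x j| ^ (p j) := by
    funext j
    exact phi_eq_rpow (hpp j) _
  rw [h1, phi_eq_rpow hp0]
  have hc : ContinuousAt (fun q : ℝ × ℝ => q.1 ^ q.2) (|x0|, p0) :=
    Real.continuousAt_rpow _ (Or.inr hp0)
  exact hc.tendsto.comp (hx.abs.prodMk_nhds hp)

lemma lower_half (hspark : sparkEq A (L + 1)) (hk : k ≤ L) {p0 : ℝ}
    (hp0 : p0 ∈ Set.Icc (0:ℝ) 1) {ε : ℝ} (hε : 0 < ε) :
    ∃ δ > 0, ∀ p ∈ Set.Icc (0:ℝ) 1, |p - p0| < δ →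
      sSup (Tset A p0 k) - ε < sSup (Tset A p k) := by
  have hne : (Tset A p0 k).Nonempty := ⟨0, Tset_nonempty hspark p0⟩
  have hlt : sSup (Tset A p0 k) - ε / 2 < sSup (Tset A p0 k) := by linarith
  obtain ⟨x, hxm, hxlt⟩ := exists_lt_of_lt_csSup hne hlt
  obtain ⟨S, z, hS, hz, hz0, rfl⟩ := hxm
  have hcont := continuous_theta_in_p hspark.2 hk hS hz hz0
  obtain ⟨δ, hδ, hδ2⟩ := Metric.continuousAt_iff.1 hcont.continuousAt (ε/2) (by linarith)
  refine ⟨δ, hδ, fun p hp hpd => ?_⟩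
  have h2 := hδ2 (by rwa [Real.dist_eq])
  rw [Real.dist_eq, abs_sub_lt_iff] at h2
  have h3 : theta p0 z S - ε/2 < theta p z S := by linarith [h2.2]
  have h4 : theta p z S ≤ sSup (Tset A p k) :=
    le_csSup (bddAbove_Tset hspark.2 hk hp.1) ⟨S, z, hS, hz, hz0, rfl⟩
  linarith

end Main3
section KeyLemma

variable {N : ℕ}

lemma key_lemma (V : Submodule ℝ (Fin N → ℝ)) (z : ℕ → Fin N → ℝ) (hzV : ∀ j, z j ∈ V)
    (p : ℕ → ℝ) (hp0 : ∀ j, 0 < p j) (hp : Filter.Tendsto p atTop (nhds 0))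
    (b : Fin N → ℝ) (hbnn : ∀ i, 0 ≤ b i)
    (hb : ∀ i, Filter.Tendsto (fun j => phi (p j) (z j i)) atTop (nhds (b i)))
    {t : ℝ} (ht : 0 < t) {i0 : Fin N} (hi0 : t ≤ b i0) :
    ∃ v ∈ V, (∀ i, b i < t → v i = 0) ∧ v i0 ≠ 0 := by
  by_contra hcon
  push_neg at hcon
  by_cases hE : ∀ i : Fin N, t ≤ b i
  · have hz0 : ∀ j, z j i0 = 0 := fun j =>
      hcon (z j) (hzV j) (fun i hi => absurd (hE i) (not_le.2 hi))
    have h0 : Filter.Tendsto (fun j => phi (p j) (z j i0)) atTop (nhds 0) := by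
      have : (fun j => phi (p j) (z j i0)) = fun _ => (0:ℝ) := by
        funext j
        rw [hz0 j]
        simp [phi]
      rw [this]
      exact tendsto_const_nhds
    have hbi0 : b i0 = 0 := tendsto_nhds_unique (hb i0) h0
    linarith
  push_neg at hE
  obtain ⟨i1, hi1⟩ := hE
  haveI : DecidablePred fun i : Fin N => b i < t := Classical.decPred _
  haveI hne : Nonempty {i : Fin N // b i < t} := ⟨⟨i1, hi1⟩⟩
  set ι := {i : Fin N // b i < t} with hι
  let π : (Fin N → ℝ) →ₗ[ℝ] (ι → ℝ) := LinearMap.funLeft ℝ ℝ (Subtype.val)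
  let π' : V →ₗ[ℝ] (ι → ℝ) := π.comp V.subtype
  let e' : V →ₗ[ℝ] ℝ := (LinearMap.proj i0).comp V.subtype
  have hker : LinearMap.ker π' ≤ LinearMap.ker e' := by
    intro v hv
    rw [LinearMap.mem_ker] at hv ⊢
    exact hcon v.1 v.2 (fun i hi => congrFun hv ⟨i, hi⟩)
  let ebar := (LinearMap.ker π').liftQ e' hker
  let equiv := LinearMap.quotKerEquivRange π'
  let ψ : LinearMap.range π' →ₗ[ℝ] ℝ := ebar.comp equiv.symm.toLinearMap
  obtain ⟨φ, hφ⟩ := LinearMap.exists_extend ψ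
  have hfact : ∀ v : V, e' v = φ (π' v) := by
    intro v
    have hmem := LinearMap.mem_range_self π' v
    have h2 : equiv (Submodule.Quotient.mk v) = ⟨π' v, hmem⟩ :=
      Subtype.ext (LinearMap.quotKerEquivRange_apply_mk π' v)
    have h3 : equiv.symm ⟨π' v, hmem⟩ = Submodule.Quotient.mk v := by
      rw [← h2, LinearEquiv.symm_apply_apply]
    have h1 := LinearMap.congr_fun hφ ⟨π' v, hmem⟩
    simp only [LinearMap.comp_apply, Submodule.coe_subtype] at h1
    rw [h1]
    show _ = ebar (equiv.symm ⟨π' v, hmem⟩)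
    rw [h3]
    exact (Submodule.liftQ_apply _ _ _).symm
  let φc := LinearMap.toContinuousLinearMap φ
  set K := ‖φc‖ + 1 with hKdef
  have hK : 0 < K := by positivity
  have hbound : ∀ j, |z j i0| ≤ K * ‖π (z j)‖ := by
    intro j
    have h1 : e' ⟨z j, hzV j⟩ = z j i0 := rfl
    have h2 : π' ⟨z j, hzV j⟩ = π (z j) := rfl
    have h0 := hfact ⟨z j, hzV j⟩
    rw [h1, h2] at h0
    rw [h0]
    calc |φ (π (z j))| = ‖φc (π (z j))‖ := by
          rw [LinearMap.coe_toContinuousLinearMap' φ, Real.norm_eq_abs]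
      _ ≤ ‖φc‖ * ‖π (z j)‖ := φc.le_opNorm _
      _ ≤ K * ‖π (z j)‖ :=
          mul_le_mul_of_nonneg_right (by linarith) (norm_nonneg _)
  have huniv : (Finset.univ : Finset ι).Nonempty := Finset.univ_nonempty
  set s : ℝ := Finset.univ.sup' huniv (fun i : ι => b i.1) with hsdef
  have hs_lt : s < t := (Finset.sup'_lt_iff huniv).2 fun i _ => i.2
  have hs_nn : 0 ≤ s :=
    le_trans (hbnn i1) (Finset.le_sup' (f := fun i : ι => b i.1) (Finset.mem_univ ⟨i1, hi1⟩))
  set c := (s + t)/2 with hcdef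
  have hc0 : 0 < c := by simp only [hcdef]; linarith
  have hsc : s < c := by simp only [hcdef]; linarith
  have hct : c < t := by simp only [hcdef]; linarith
  set r := (c + t)/2 with hrdef
  have hcr : c < r := by simp only [hrdef]; linarith
  have hrt : r < t := by simp only [hrdef]; linarith
  have hr0 : 0 < r := by linarith
  have ev1 : ∀ᶠ j in atTop, ∀ i : ι, phi (p j) (z j i.1) ≤ c :=
    Filter.eventually_all.2 fun i =>
      ((hb i.1).eventually_lt_const
        (lt_of_le_of_lt (Finset.le_sup' (f := fun i : ι => b i.1) (Finset.mem_univ i)) hsc)).mono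
        fun j h => h.le
  have hKtend : Filter.Tendsto (fun j => K ^ (p j)) atTop (nhds 1) := by
    have h := (Real.continuousAt_const_rpow (b := (0:ℝ)) hK.ne').tendsto.comp hp
    simpa [Real.rpow_zero, Function.comp_def] using h
  have ev2 : ∀ᶠ j in atTop, K ^ (p j) ≤ r / c :=
    (hKtend.eventually_lt_const (by rw [lt_div_iff₀ hc0]; linarith)).mono fun j h => h.le
  have ev3 : ∀ᶠ j in atTop, r < phi (p j) (z j i0) :=
    (hb i0).eventually_const_lt (lt_of_lt_of_le hrt hi0)
  obtain ⟨j, hj1, hj2, hj3⟩ := (ev1.and (ev2.and ev3)).exists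
  obtain ⟨i, hi⟩ := exists_abs_eq_norm (π (z j))
  have hπn : ‖π (z j)‖ ^ (p j) ≤ c := by
    rw [hi]
    have h := hj1 i
    rw [phi_eq_rpow (hp0 j)] at h
    exact h
  have hfin : phi (p j) (z j i0) ≤ r := by
    rw [phi_eq_rpow (hp0 j)]
    calc |z j i0| ^ (p j) ≤ (K * ‖π (z j)‖) ^ (p j) :=
          Real.rpow_le_rpow (abs_nonneg _) (hbound j) (hp0 j).le
      _ = K ^ (p j) * ‖π (z j)‖ ^ (p j) := Real.mul_rpow hK.le (norm_nonneg _)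
      _ ≤ (r / c) * c :=
          mul_le_mul hj2 hπn (Real.rpow_nonneg (norm_nonneg _) _)
            (div_nonneg hr0.le hc0.le)
      _ = r := div_mul_cancel₀ r hc0.ne'
  linarith

end KeyLemma
section Supports
open Classical

variable {N : ℕ}

lemma union_supp (V : Submodule ℝ (Fin N → ℝ)) (U : Finset (Fin N))
    (h : ∀ i ∈ U, ∃ v ∈ V, (∀ j, j ∉ U → v j = 0) ∧ v i ≠ 0) :
    ∃ v ∈ V, (∀ j, j ∉ U → v j = 0) ∧ ∀ i ∈ U, v i ≠ 0 := by
  suffices haux : ∀ W : Finset (Fin N), W ⊆ U →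
      ∃ v ∈ V, (∀ j, j ∉ U → v j = 0) ∧ ∀ i ∈ W, v i ≠ 0 from haux U (subset_refl U)
  intro W
  induction W using Finset.induction_on with
  | empty =>
    exact fun _ => ⟨0, V.zero_mem, fun j _ => rfl, fun i hi => absurd hi (Finset.notMem_empty i)⟩
  | insert _ _ hiW ih =>
    rename_i i W
    intro hsub
    have hWU : W ⊆ U := (Finset.subset_insert i W).trans hsub
    obtain ⟨v, hvV, hv0, hvW⟩ := ih hWU
    obtain ⟨w, hwV, hw0, hwi⟩ := h i (hsub (Finset.mem_insert_self i W))
    let B : Finset ℝ :=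
      insert 0 (((insert i W).filter (fun j => w j ≠ 0)).image (fun j => -(v j) / (w j)))
    obtain ⟨τ, hτ⟩ := Finset.exists_notMem B
    have hτ0 : τ ≠ 0 := fun h0 => hτ (h0 ▸ Finset.mem_insert_self 0 _)
    refine ⟨v + τ • w, V.add_mem hvV (V.smul_mem τ hwV), ?_, ?_⟩
    · intro j hj
      simp [hv0 j hj, hw0 j hj]
    · intro j hj
      by_cases hwj : w j = 0
      · have hji : j ≠ i := fun h0 => hwi (h0 ▸ hwj)
        have hjW : j ∈ W := by
          rcases Finset.mem_insert.1 hj with h0 | h0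
          · exact absurd h0 hji
          · exact h0
        simpa [Pi.add_apply, hwj] using hvW j hjW
      · intro hzero
        apply hτ
        have hτv : τ = -(v j) / (w j) := by
          rw [eq_div_iff hwj]
          have : v j + τ * w j = 0 := by simpa [Pi.add_apply, smul_eq_mul] using hzero
          linarith
        exact Finset.mem_insert.2 (Or.inr (Finset.mem_image.2
          ⟨j, Finset.mem_filter.2 ⟨hj, hwj⟩, hτv.symm⟩))

lemma layer_cake (S : Finset (Fin N)) (g : ℝ) (hg : 0 ≤ g) :
    ∀ n : ℕ, ∀ b : Fin N → ℝ, (∀ i, 0 ≤ b i) →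
      (∀ t : ℝ, 0 < t →
        ((S.filter (fun i => t ≤ b i)).card : ℝ) ≤ g * ((Sᶜ.filter (fun i => t ≤ b i)).card)) →
      ((Finset.univ.filter (fun i => 0 < b i)).image b).card = n →
      ∑ i ∈ S, b i ≤ g * ∑ i ∈ Sᶜ, b i := by
  intro n
  induction n using Nat.strong_induction_on with
  | _ n ih =>
  intro b hbnn hH hcard
  rcases Nat.eq_zero_or_pos n with rfl | hn
  · have hP : (Finset.univ.filter (fun i => 0 < b i)).image b = ∅ :=
      Finset.card_eq_zero.1 hcard
    have hb0 : ∀ i, b i = 0 := by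
      intro i
      by_contra h0
      have hpos : 0 < b i := lt_of_le_of_ne (hbnn i) (Ne.symm h0)
      have : b i ∈ (Finset.univ.filter (fun i => 0 < b i)).image b :=
        Finset.mem_image.2 ⟨i, Finset.mem_filter.2 ⟨Finset.mem_univ i, hpos⟩, rfl⟩
      rw [hP] at this
      exact absurd this (Finset.notMem_empty _)
    simp [Finset.sum_congr rfl fun i _ => hb0 i]
  · set P := (Finset.univ.filter (fun i => 0 < b i)).image b with hPdef
    have hPne : P.Nonempty := Finset.card_pos.1 (hcard ▸ hn)
    set t := P.min' hPne with htdef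
    have htP : t ∈ P := P.min'_mem hPne
    obtain ⟨it, hit, hbit⟩ := Finset.mem_image.1 htP
    have ht : 0 < t := hbit ▸ (Finset.mem_filter.1 hit).2
    set b' : Fin N → ℝ := fun i => if t ≤ b i then b i - t else 0 with hb'def
    have hb'nn : ∀ i, 0 ≤ b' i := by
      intro i
      simp only [hb'def]
      split
      · linarith
      · exact le_refl 0
    have hbsmall : ∀ i, ¬ t ≤ b i → b i = 0 := by
      intro i hi
      by_contra h0
      have hpos : 0 < b i := lt_of_le_of_ne (hbnn i) (Ne.symm h0)
      have hmem : b i ∈ P :=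
        Finset.mem_image.2 ⟨i, Finset.mem_filter.2 ⟨Finset.mem_univ i, hpos⟩, rfl⟩
      exact hi (P.min'_le _ hmem)
    have hdecomp : ∀ i, b i = b' i + (if t ≤ b i then t else 0) := by
      intro i
      simp only [hb'def]
      split
      · ring
      · simpa using hbsmall i ‹_›
    have hiff : ∀ s, 0 < s → ∀ i, (s ≤ b' i ↔ s + t ≤ b i) := by
      intro s hs i
      simp only [hb'def]
      split
      · constructor <;> intro <;> linarith
      · rename_i hnt
        have hlt' := not_le.1 hnt
        constructor
        · intro h0; linarith
        · intro h0; linarith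
    have hH' : ∀ s, 0 < s →
        ((S.filter (fun i => s ≤ b' i)).card : ℝ) ≤
          g * ((Sᶜ.filter (fun i => s ≤ b' i)).card) := by
      intro s hs
      have e1 : S.filter (fun i => s ≤ b' i) = S.filter (fun i => s + t ≤ b i) := by
        ext j; simp [Finset.mem_filter, hiff s hs j]
      have e2 : Sᶜ.filter (fun i => s ≤ b' i) = Sᶜ.filter (fun i => s + t ≤ b i) := by
        ext j; simp [Finset.mem_filter, hiff s hs j]
      rw [e1, e2]
      exact hH (s + t) (by linarith)
    set P' := (Finset.univ.filter (fun i => 0 < b' i)).image b' with hP'def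
    have hsub : P' ⊆ (P.erase t).image (fun x => x - t) := by
      intro x hx
      obtain ⟨i, hi, rfl⟩ := Finset.mem_image.1 hx
      have hbi' : 0 < b' i := (Finset.mem_filter.1 hi).2
      have hti : t ≤ b i := by
        by_contra h0
        rw [hb'def] at hbi'
        simp only [if_neg h0] at hbi'
        exact lt_irrefl 0 hbi'
      have hbv : b' i = b i - t := by rw [hb'def]; simp only [if_pos hti]
      have hgt : t < b i := by rw [hbv] at hbi'; linarith
      have hmem : b i ∈ P :=
        Finset.mem_image.2 ⟨i, Finset.mem_filter.2 ⟨Finset.mem_univ i, by linarith⟩, rfl⟩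
      exact Finset.mem_image.2 ⟨b i, Finset.mem_erase.2 ⟨ne_of_gt hgt, hmem⟩, by rw [hbv]⟩
    have hPn : P.card = n := hcard
    have hlt : P'.card < n := by
      have c1 : P'.card ≤ ((P.erase t).image (fun x => x - t)).card := Finset.card_le_card hsub
      have c2 : ((P.erase t).image (fun x => x - t)).card ≤ (P.erase t).card :=
        Finset.card_image_le
      have c3 : (P.erase t).card = P.card - 1 := Finset.card_erase_of_mem htP
      omega
    have hIH := ih P'.card hlt b' hb'nn hH' rfl
    have hione : ∀ T : Finset (Fin N),
        ∑ i ∈ T, (if t ≤ b i then t else 0) = t * ((T.filter (fun i => t ≤ b i)).card : ℝ) := by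
      intro T
      rw [Finset.sum_ite, Finset.sum_const, Finset.sum_const_zero, add_zero,
        nsmul_eq_mul, mul_comm]
    have hsplit : ∀ T : Finset (Fin N),
        ∑ i ∈ T, b i = (∑ i ∈ T, b' i) + t * ((T.filter (fun i => t ≤ b i)).card : ℝ) := by
      intro T
      calc ∑ i ∈ T, b i = ∑ i ∈ T, (b' i + if t ≤ b i then t else 0) :=
            Finset.sum_congr rfl fun i _ => hdecomp i
        _ = (∑ i ∈ T, b' i) + ∑ i ∈ T, (if t ≤ b i then t else 0) := Finset.sum_add_distrib
        _ = (∑ i ∈ T, b' i) + t * ((T.filter (fun i => t ≤ b i)).card : ℝ) := by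
            rw [hione T]
    have hlevel := hH t ht
    have h1 : t * ((S.filter (fun i => t ≤ b i)).card : ℝ) ≤
        g * (t * ((Sᶜ.filter (fun i => t ≤ b i)).card : ℝ)) := by
      calc t * ((S.filter (fun i => t ≤ b i)).card : ℝ)
          ≤ t * (g * ((Sᶜ.filter (fun i => t ≤ b i)).card : ℝ)) :=
            mul_le_mul_of_nonneg_left hlevel ht.le
        _ = g * (t * ((Sᶜ.filter (fun i => t ≤ b i)).card : ℝ)) := by ring
    rw [hsplit S, hsplit Sᶜ]
    calc (∑ i ∈ S, b' i) + t * ((S.filter (fun i => t ≤ b i)).card : ℝ)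
        ≤ g * (∑ i ∈ Sᶜ, b' i) + g * (t * ((Sᶜ.filter (fun i => t ≤ b i)).card : ℝ)) :=
          add_le_add hIH h1
      _ = g * ((∑ i ∈ Sᶜ, b' i) + t * ((Sᶜ.filter (fun i => t ≤ b i)).card : ℝ)) := by ring

end Supports
section Main4
open Classical

variable {M N L k : ℕ} {A : Matrix (Fin M) (Fin N) ℝ}

lemma tendsto_of_abs_sub_lt {p : ℕ → ℝ} {p0 : ℝ} (h : ∀ j : ℕ, |p j - p0| < 1/((j:ℝ)+1)) :
    Filter.Tendsto p atTop (nhds p0) := by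
  rw [tendsto_iff_dist_tendsto_zero]
  exact squeeze_zero (fun j => dist_nonneg)
    (fun j => by rw [Real.dist_eq]; exact (h j).le)
    tendsto_one_div_add_atTop_nhds_zero_nat

lemma sum_phi_zero_eq (v : Fin N → ℝ) (T : Finset (Fin N)) :
    ∑ i ∈ T, phi 0 (v i) = ((T.filter (fun i => v i ≠ 0)).card : ℝ) := by
  rw [Finset.sum_congr rfl (fun i _ => phi_zero (v i)), Finset.sum_ite]
  simp

lemma compl_filter_card_pos (hk : k ≤ L) {S U : Finset (Fin N)} (hS : S.card ≤ k)
    (hU : L + 1 ≤ U.card) : 1 ≤ (Sᶜ.filter (fun i => i ∈ U)).card := by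
  have hpart := Finset.card_filter_add_card_filter_not
    (s := U) (p := fun i => i ∈ S)
  have he : Sᶜ.filter (fun i => i ∈ U) = U.filter (fun i => ¬ i ∈ S) := by
    ext i
    simp [Finset.mem_filter, Finset.mem_compl, and_comm]
  have hle : (U.filter (fun i => i ∈ S)).card ≤ S.card := by
    apply Finset.card_le_card
    intro i hi
    exact (Finset.mem_filter.1 hi).2
  rw [he]
  omega

lemma level_bound (hspark : sparkEq A (L + 1)) (hk : k ≤ L) {S : Finset (Fin N)}
    (hS : S.card ≤ k) {U : Finset (Fin N)} {v : Fin N → ℝ} (hv : A.mulVec v = 0)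
    (hvU : ∀ i, v i ≠ 0 ↔ i ∈ U) (hUne : U.Nonempty) :
    ((S.filter (fun i => i ∈ U)).card : ℝ) ≤
      sSup (Tset A (0:ℝ) k) * ((Sᶜ.filter (fun i => i ∈ U)).card) := by
  obtain ⟨i1, hi1⟩ := hUne
  have hv0 : v ≠ 0 := by
    intro h0
    exact ((hvU i1).2 hi1) (by rw [h0]; rfl)
  have hUcard : L + 1 ≤ U.card := by
    have h := hspark.2 v hv hv0
    have he : supp v = U := by
      ext i
      rw [mem_supp_iff, hvU i]
    rwa [he] at h
  have hmem : theta 0 v S ∈ Tset A (0:ℝ) k := ⟨S, v, hS, hv, hv0, rfl⟩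
  have hle : theta 0 v S ≤ sSup (Tset A (0:ℝ) k) :=
    le_csSup (bddAbove_Tset_zero hspark.2 hk) hmem
  have hnum : ∑ i ∈ S, phi 0 (v i) = ((S.filter (fun i => i ∈ U)).card : ℝ) := by
    rw [sum_phi_zero_eq]
    congr 2
    exact Finset.filter_congr fun i _ => by rw [hvU i]
  have hden : ∑ i ∈ Sᶜ, phi 0 (v i) = ((Sᶜ.filter (fun i => i ∈ U)).card : ℝ) := by
    rw [sum_phi_zero_eq]
    congr 2
    exact Finset.filter_congr fun i _ => by rw [hvU i]
  have hden1 : (1:ℝ) ≤ ((Sᶜ.filter (fun i => i ∈ U)).card : ℝ) := by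
    exact_mod_cast compl_filter_card_pos hk hS hUcard
  rw [theta, hnum, hden, div_le_iff₀ (by linarith)] at hle
  exact hle

end Main4
section Main5
open Classical

variable {M N L k : ℕ} {A : Matrix (Fin M) (Fin N) ℝ}

lemma usc_zero (hspark : sparkEq A (L + 1)) (hk : k ≤ L) {ε : ℝ} (hε : 0 < ε) :
    ∃ δ > 0, ∀ p ∈ Set.Icc (0:ℝ) 1, |p - 0| < δ →
      sSup (Tset A p k) < sSup (Tset A (0:ℝ) k) + ε := by
  set g := sSup (Tset A (0:ℝ) k) with hgdef
  have hg0 : 0 ≤ g := le_csSup (bddAbove_Tset_zero hspark.2 hk) (Tset_nonempty hspark 0)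
  by_contra hcon
  push_neg at hcon
  have hseq : ∀ j : ℕ, ∃ q, (q ∈ Set.Icc (0:ℝ) 1 ∧ |q - 0| < 1/((j:ℝ)+1)) ∧
      g + ε ≤ sSup (Tset A q k) := by
    intro j
    obtain ⟨q, hq1, hq2, hq3⟩ := hcon (1/((j:ℝ)+1)) (by positivity)
    exact ⟨q, ⟨hq1, hq2⟩, hq3⟩
  choose p hpm hsup using hseq
  have hto : Filter.Tendsto p atTop (nhds 0) :=
    tendsto_of_abs_sub_lt (fun j => by simpa using (hpm j).2)
  have hppos : ∀ j, 0 < p j := by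
    intro j
    rcases eq_or_lt_of_le (hpm j).1.1 with h | h
    · exfalso
      have h2 := hsup j
      rw [← h] at h2
      linarith
    · exact h
  have helts : ∀ j, ∃ S : Finset (Fin N), ∃ z, S.card ≤ k ∧ A.mulVec z = 0 ∧ ‖z‖ = 1 ∧
      g + ε/2 < theta (p j) z S := by
    intro j
    have hne : (Tset A (p j) k).Nonempty := ⟨0, Tset_nonempty hspark _⟩
    have hlt : g + ε/2 < sSup (Tset A (p j) k) := lt_of_lt_of_le (by linarith) (hsup j)
    obtain ⟨x, hx, hgx⟩ := exists_lt_of_lt_csSup hne hlt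
    obtain ⟨S, z, h1, h2, h3, rfl⟩ := mem_Tset_sphere hx
    exact ⟨S, z, h1, h2, h3, hgx⟩
  choose S z hSc hzker hznorm htheta using helts
  obtain ⟨S0, φ0, hφ0, hφS⟩ := exists_const_subseq S
  have hNne : Nonempty (Fin N) := by
    obtain ⟨z0, hz0k, hz00, -⟩ := hspark.1
    by_contra hNe
    exact hz00 (funext fun i => absurd ⟨i⟩ hNe)
  set F : ℕ → Fin N → ℝ := fun j i => phi (p (φ0 j)) (z (φ0 j) i) with hFdef
  have hFmem : ∀ j, F j ∈ Set.Icc (0 : Fin N → ℝ) 1 := by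
    intro j
    refine Set.mem_Icc.2 ⟨fun i => phi_nonneg _ _, fun i => ?_⟩
    refine phi_le_one (hppos _).le ?_
    have h1 : ‖z (φ0 j) i‖ ≤ ‖z (φ0 j)‖ := norm_le_pi_norm _ i
    rw [hznorm (φ0 j)] at h1
    rwa [Real.norm_eq_abs] at h1
  obtain ⟨b, hbmem, ψ, hψ, hψtend⟩ :=
    (isCompact_Icc (a := (0 : Fin N → ℝ)) (b := 1)).tendsto_subseq hFmem
  set φ : ℕ → ℕ := φ0 ∘ ψ with hφdef
  have hφmono : StrictMono φ := hφ0.comp hψ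
  set q : ℕ → ℝ := fun j => p (φ j) with hqdef
  set w : ℕ → Fin N → ℝ := fun j => z (φ j) with hwdef
  have hq0 : ∀ j, 0 < q j := fun j => hppos _
  have hqto : Filter.Tendsto q atTop (nhds 0) := hto.comp (hφmono.tendsto_atTop)
  have hb : ∀ i, Filter.Tendsto (fun j => phi (q j) (w j i)) atTop (nhds (b i)) := by
    intro i
    exact ((continuous_apply i).tendsto b).comp hψtend
  have hbnn : ∀ i, 0 ≤ b i := fun i => hbmem.1 i
  set V : Submodule ℝ (Fin N → ℝ) := LinearMap.ker (Matrix.mulVecLin A) with hVdef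
  have hwV : ∀ j, w j ∈ V := by
    intro j
    rw [hVdef, LinearMap.mem_ker, Matrix.mulVecLin_apply]
    exact hzker (φ j)
  have hsum1 : (1:ℝ) ≤ ∑ i, b i := by
    have hstep : ∀ j, (1:ℝ) ≤ ∑ i, phi (q j) (w j i) := by
      intro j
      obtain ⟨i, hi⟩ := exists_abs_eq_norm (w j)
      have h1 : |w j i| = 1 := by rw [← hi]; exact hznorm (φ j)
      have h2 : phi (q j) (w j i) = 1 := by
        rw [phi_eq_rpow (hq0 j), h1, Real.one_rpow]
      calc (1:ℝ) = phi (q j) (w j i) := h2.symm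
        _ ≤ ∑ i', phi (q j) (w j i') :=
            Finset.single_le_sum (fun i' _ => phi_nonneg _ _) (Finset.mem_univ i)
    exact ge_of_tendsto (tendsto_finset_sum _ (fun i _ => hb i))
      (Filter.Eventually.of_forall hstep)
  have hS0c : S0.card ≤ k := by rw [← hφS 0]; exact hSc (φ0 0)
  -- key construction at each positive level
  have hUkey : ∀ t : ℝ, 0 < t → (∃ i, t ≤ b i) →
      ∃ v, A.mulVec v = 0 ∧
        (∀ i, v i ≠ 0 ↔ i ∈ Finset.univ.filter (fun i => t ≤ b i)) ∧
        (Finset.univ.filter (fun i => t ≤ b i)).Nonempty ∧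
        L + 1 ≤ (Finset.univ.filter (fun i => t ≤ b i)).card := by
    intro t ht ⟨iw, hiw⟩
    set U : Finset (Fin N) := Finset.univ.filter (fun i => t ≤ b i) with hUdef
    have hexist : ∀ i ∈ U, ∃ v ∈ V, (∀ j', j' ∉ U → v j' = 0) ∧ v i ≠ 0 := by
      intro i hi
      have hbi : t ≤ b i := (Finset.mem_filter.1 hi).2
      obtain ⟨v, hvV, hv1, hv2⟩ := key_lemma V w hwV q hq0 hqto b hbnn hb ht hbi
      refine ⟨v, hvV, ?_, hv2⟩
      intro j' hj'
      apply hv1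
      by_contra hge
      exact hj' (Finset.mem_filter.2 ⟨Finset.mem_univ _, not_lt.1 hge⟩)
    obtain ⟨v, hvV, hvz, hvnz⟩ := union_supp V U hexist
    have hvU : ∀ i, v i ≠ 0 ↔ i ∈ U := by
      intro i
      constructor
      · intro h0
        by_contra hiU
        exact h0 (hvz i hiU)
      · intro hiU
        exact hvnz i hiU
    have hUne : U.Nonempty := ⟨iw, Finset.mem_filter.2 ⟨Finset.mem_univ _, hiw⟩⟩
    have hvker : A.mulVec v = 0 := by
      rw [hVdef, LinearMap.mem_ker, Matrix.mulVecLin_apply] at hvV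
      exact hvV
    have hv0 : v ≠ 0 := by
      obtain ⟨i1, hi1⟩ := hUne
      intro h0
      exact ((hvU i1).2 hi1) (by rw [h0]; rfl)
    have hUcard : L + 1 ≤ U.card := by
      have h := hspark.2 v hvker hv0
      have he : supp v = U := by
        ext i
        rw [mem_supp_iff, hvU i]
      rwa [he] at h
    exact ⟨v, hvker, hvU, hUne, hUcard⟩
  have hlevels : ∀ t : ℝ, 0 < t →
      ((S0.filter (fun i => t ≤ b i)).card : ℝ) ≤
        g * ((S0ᶜ.filter (fun i => t ≤ b i)).card) := by
    intro t ht
    by_cases hne : ∃ i, t ≤ b i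
    · obtain ⟨v, hvker, hvU, hUne, hUcard⟩ := hUkey t ht hne
      have hlb := level_bound hspark hk hS0c hvker hvU hUne
      have e1 : S0.filter (fun i => t ≤ b i) =
          S0.filter (fun i => i ∈ Finset.univ.filter (fun i => t ≤ b i)) := by
        ext i; simp [Finset.mem_filter]
      have e2 : S0ᶜ.filter (fun i => t ≤ b i) =
          S0ᶜ.filter (fun i => i ∈ Finset.univ.filter (fun i => t ≤ b i)) := by
        ext i; simp [Finset.mem_filter]
      rw [e1, e2]
      exact hlb
    · push_neg at hne
      have e0 : S0.filter (fun i => t ≤ b i) = ∅ :=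
        Finset.filter_false_of_mem fun i _ => not_le.2 (hne i)
      rw [e0]
      simpa using mul_nonneg hg0 (Nat.cast_nonneg _)
  have hlayer := layer_cake S0 g hg0 _ b hbnn hlevels rfl
  -- denominator positivity
  obtain ⟨istar, histar⟩ : ∃ i, 0 < b i := by
    by_contra hall
    push_neg at hall
    have hs : ∑ i, b i ≤ 0 := Finset.sum_nonpos fun i _ => hall i
    linarith
  have hden : 0 < ∑ i ∈ S0ᶜ, b i := by
    obtain ⟨v, hvker, hvU, hUne, hUcard⟩ :=
      hUkey (b istar) histar ⟨istar, le_refl _⟩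
    have hcard1 := compl_filter_card_pos (S := S0) hk hS0c hUcard
    obtain ⟨i2, hi2⟩ := Finset.card_pos.1 hcard1
    have hi2c : i2 ∈ S0ᶜ := (Finset.mem_filter.1 hi2).1
    have hi2U : b istar ≤ b i2 :=
      (Finset.mem_filter.1 ((Finset.mem_filter.1 hi2).2)).2
    calc (0:ℝ) < b istar := histar
      _ ≤ b i2 := hi2U
      _ ≤ ∑ i ∈ S0ᶜ, b i :=
          Finset.single_le_sum (fun i _ => hbnn i) hi2c
  have hratio : Filter.Tendsto (fun j => theta (q j) (w j) S0) atTop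
      (nhds ((∑ i ∈ S0, b i) / (∑ i ∈ S0ᶜ, b i))) := by
    simp only [theta]
    exact (tendsto_finset_sum _ (fun i _ => hb i)).div
      (tendsto_finset_sum _ (fun i _ => hb i)) hden.ne'
  have hlow : ∀ j, g + ε/2 ≤ theta (q j) (w j) S0 := by
    intro j
    have h := htheta (φ j)
    have hSS : S (φ j) = S0 := hφS (ψ j)
    rw [hSS] at h
    exact h.le
  have h1 : g + ε/2 ≤ (∑ i ∈ S0, b i) / (∑ i ∈ S0ᶜ, b i) :=
    ge_of_tendsto hratio (Filter.Eventually.of_forall hlow)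
  have h2 : (∑ i ∈ S0, b i) / (∑ i ∈ S0ᶜ, b i) ≤ g := by
    rw [div_le_iff₀ hden]
    exact hlayer
  linarith

end Main5
section Main6
open Classical

variable {M N L k : ℕ} {A : Matrix (Fin M) (Fin N) ℝ}

lemma usc_pos (hspark : sparkEq A (L + 1)) (hk : k ≤ L) {p0 : ℝ} (hp0 : 0 < p0)
    {ε : ℝ} (hε : 0 < ε) :
    ∃ δ > 0, ∀ p ∈ Set.Icc (0:ℝ) 1, |p - p0| < δ →
      sSup (Tset A p k) < sSup (Tset A p0 k) + ε := by
  set g := sSup (Tset A p0 k) with hgdef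
  by_contra hcon
  push_neg at hcon
  have hseq : ∀ j : ℕ, ∃ q, (q ∈ Set.Icc (0:ℝ) 1 ∧ |q - p0| < 1/((j:ℝ)+1)) ∧
      g + ε ≤ sSup (Tset A q k) := by
    intro j
    obtain ⟨q, hq1, hq2, hq3⟩ := hcon (1/((j:ℝ)+1)) (by positivity)
    exact ⟨q, ⟨hq1, hq2⟩, hq3⟩
  choose p hpm hsup using hseq
  have hto : Filter.Tendsto p atTop (nhds p0) :=
    tendsto_of_abs_sub_lt (fun j => (hpm j).2)
  have hev : ∀ᶠ j in atTop, p0/2 < p j := hto.eventually_const_lt (by linarith)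
  obtain ⟨φ1, hφ1, hφ1p⟩ := Filter.extraction_of_frequently_atTop hev.frequently
  have helts : ∀ j, ∃ S : Finset (Fin N), ∃ z, S.card ≤ k ∧ A.mulVec z = 0 ∧ ‖z‖ = 1 ∧
      g + ε/2 < theta (p j) z S := by
    intro j
    have hne : (Tset A (p j) k).Nonempty := ⟨0, Tset_nonempty hspark _⟩
    have hlt : g + ε/2 < sSup (Tset A (p j) k) := lt_of_lt_of_le (by linarith) (hsup j)
    obtain ⟨x, hx, hgx⟩ := exists_lt_of_lt_csSup hne hlt
    obtain ⟨S, z, h1, h2, h3, rfl⟩ := mem_Tset_sphere hx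
    exact ⟨S, z, h1, h2, h3, hgx⟩
  choose S z hSc hzker hznorm htheta using helts
  obtain ⟨S0, φ2, hφ2, hφ2S⟩ := exists_const_subseq (fun j => S (φ1 j))
  have hmemK : ∀ j, z (φ1 (φ2 j)) ∈ {z : Fin N → ℝ | A.mulVec z = 0 ∧ ‖z‖ = 1} :=
    fun j => ⟨hzker _, hznorm _⟩
  obtain ⟨zlim, hzlimmem, ψ, hψ, hψtend⟩ := isCompact_sphK.tendsto_subseq hmemK
  set φ : ℕ → ℕ := fun j => φ1 (φ2 (ψ j)) with hφdef
  have hφmono : StrictMono φ := (hφ1.comp hφ2).comp hψ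
  set q : ℕ → ℝ := fun j => p (φ j) with hqdef
  set w : ℕ → Fin N → ℝ := fun j => z (φ j) with hwdef
  have hq0 : ∀ j, 0 < q j := fun j => lt_trans (by linarith) (hφ1p (φ2 (ψ j)))
  have hqto : Filter.Tendsto q atTop (nhds p0) := hto.comp (hφmono.tendsto_atTop)
  have hwten : ∀ i, Filter.Tendsto (fun j => w j i) atTop (nhds (zlim i)) := by
    intro i
    exact ((continuous_apply i).tendsto zlim).comp hψtend
  have hS0c : S0.card ≤ k := by rw [← hφ2S 0]; exact hSc _
  have hzlimker : A.mulVec zlim = 0 := hzlimmem.1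
  have hzlim0 : zlim ≠ 0 := by
    intro h0
    have := hzlimmem.2
    rw [h0, norm_zero] at this
    norm_num at this
  have hdpos := denom_pos hspark.2 hk hS0c hzlimker hzlim0 p0
  have hratio : Filter.Tendsto (fun j => theta (q j) (w j) S0) atTop
      (nhds (theta p0 zlim S0)) := by
    simp only [theta]
    exact (tendsto_finset_sum _ (fun i _ => tendsto_phi_joint hp0 hq0 hqto (hwten i))).div
      (tendsto_finset_sum _ (fun i _ => tendsto_phi_joint hp0 hq0 hqto (hwten i))) hdpos.ne'
  have hlow : ∀ j, g + ε/2 ≤ theta (q j) (w j) S0 := by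
    intro j
    have h := htheta (φ j)
    have hSS : S (φ j) = S0 := hφ2S (ψ j)
    rw [hSS] at h
    exact h.le
  have h1 : g + ε/2 ≤ theta p0 zlim S0 :=
    ge_of_tendsto hratio (Filter.Eventually.of_forall hlow)
  have h2 : theta p0 zlim S0 ≤ g :=
    le_csSup (bddAbove_Tset_pos hspark.2 hk hp0) ⟨S0, zlim, hS0c, hzlimker, hzlim0, rfl⟩
  linarith

end Main6

/-- p ↦ γ(ℓ_p,A,k) is continuous on [0,1]. -/
theorem stmt8 {M N L : ℕ} (A : Matrix (Fin M) (Fin N) ℝ) (hspark : sparkEq A (L + 1))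
    (k : ℕ) (hk : k ≤ L) :
    ContinuousOn (fun p => gammaNSC A p k) (Set.Icc (0 : ℝ) 1) := by
  have hsp := hspark.2
  have hcont : ContinuousOn (fun p => sSup (Tset A p k)) (Set.Icc (0 : ℝ) 1) := by
    intro p0 hp0
    rw [Metric.continuousWithinAt_iff]
    intro ε hε
    obtain ⟨δ1, hδ1p, h1⟩ := lower_half hspark hk hp0 (half_pos hε)
    have h2ex : ∃ δ > 0, ∀ p ∈ Set.Icc (0:ℝ) 1, |p - p0| < δ →
        sSup (Tset A p k) < sSup (Tset A p0 k) + ε/2 := by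
      rcases eq_or_lt_of_le hp0.1 with h | h
      · subst h
        exact usc_zero hspark hk (half_pos hε)
      · exact usc_pos hspark hk h (half_pos hε)
    obtain ⟨δ2, hδ2p, h2⟩ := h2ex
    refine ⟨min δ1 δ2, lt_min hδ1p hδ2p, ?_⟩
    intro x hx hdist
    rw [Real.dist_eq] at hdist
    have ha := h1 x hx (lt_of_lt_of_le hdist (min_le_left _ _))
    have hb2 := h2 x hx (lt_of_lt_of_le hdist (min_le_right _ _))
    rw [Real.dist_eq, abs_sub_lt_iff]
    constructor <;> linarith
  refine hcont.congr ?_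
  intro p hp
  exact gammaNSC_eq_sSup hspark hk p (bddAbove_Tset hsp hk hp.1)
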